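/- For each λ ∈ {1, 2, ℵ₀} and each cardinal κ with ℵ₁ ≤ κ ≤ 𝔠, there is a downward-closed family F ⊆ ω^↑ω such that b(F) = λ, d(F) = κ, and F has upper bound at most ω₁: there exists H ⊆ F↓ of cardinality at most ℵ₁ such that no g ∈ F↓ satisfies g ≺ h for all h ∈ H. -/

import Mathlib

open Filter Set

/-- The set of monotone (nondecreasing) functions ℕ → ℕ, i.e. ω^↑ω. -/
def MonoFam : Set (ℕ → ℕ) := {f | Monotone f}

/-- `f ≤* g` : `f n ≤ g n` for all but finitely many `n`. -/
def LeStar (f g : ℕ → ℕ) : Prop := ∀ᶠ n in atTop, f n ≤ g n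

/-- `f <* g` : `f n < g n` for all but finitely many `n`. -/
def LtStar (f g : ℕ → ℕ) : Prop := ∀ᶠ n in atTop, f n < g n

/-- `f ≺ g` : `lim (g n - f n) = +∞`. -/
def Prec (f g : ℕ → ℕ) : Prop := ∀ N : ℕ, ∀ᶠ n in atTop, f n + N ≤ g n

/-- `F` is closed downward under `≤*` within the monotone functions. -/
def DownwardClosed (F : Set (ℕ → ℕ)) : Prop :=
  ∀ f, Monotone f → ∀ g ∈ F, LeStar f g → f ∈ F

/-- `H` is unbounded in `F`. -/
def UnboundedIn (H F : Set (ℕ → ℕ)) : Prop :=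
  ∀ f ∈ F, ∃ h ∈ H, ¬ LtStar h f

/-- `H` dominates `F`. -/
def DominatesIn (H F : Set (ℕ → ℕ)) : Prop :=
  ∀ f ∈ F, ∃ h ∈ H, LeStar f h

/-- The bounding number `b(F)`. -/
noncomputable def bNum (F : Set (ℕ → ℕ)) : Cardinal :=
  sInf {c : Cardinal | ∃ H : Set (ℕ → ℕ), H ⊆ F ∧ UnboundedIn H F ∧ Cardinal.mk H = c}

/-- The dominating number `d(F)`. -/
noncomputable def dNum (F : Set (ℕ → ℕ)) : Cardinal :=
  sInf {c : Cardinal | ∃ H : Set (ℕ → ℕ), H ⊆ F ∧ DominatesIn H F ∧ Cardinal.mk H = c}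

/-- Membership in the S-class. -/
def SClass (F : Set (ℕ → ℕ)) : Prop :=
  ∃ h g : ℕ → ℕ, Monotone h ∧ Monotone g ∧
    (∀ f ∈ F, ∃ᶠ n in atTop, f n ≤ h n) ∧
    (∀ f, Monotone f → (∃ᶠ n in atTop, f n ≤ g n) → f ∈ F)

/-- A nonprincipal ultrafilter. -/
def NonPrincipal (U : Ultrafilter ℕ) : Prop := ∀ a : ℕ, U ≠ pure a

/-- Membership in the U-class for an ultrafilter `U`. -/
def UClass (U : Ultrafilter ℕ) (F : Set (ℕ → ℕ)) : Prop :=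
  ∃ h g : ℕ → ℕ, Monotone h ∧ Monotone g ∧
    (∀ f ∈ F, {n | f n ≤ h n} ∈ U) ∧
    (∀ f, Monotone f → {n | f n ≤ g n} ∈ U → f ∈ F)

/-- `χ(U)`, the least cardinality of a base generating the ultrafilter `U`. -/
noncomputable def ultraChi (U : Ultrafilter ℕ) : Cardinal :=
  sInf {c : Cardinal | ∃ B : Set (Set ℕ),
    (∀ b ∈ B, b ∈ U) ∧ (∀ A ∈ U, ∃ b ∈ B, b ⊆ A) ∧ Cardinal.mk B = c}

/-- The ultrafilter number `𝔲`. -/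
noncomputable def uNum : Cardinal :=
  sInf {c : Cardinal | ∃ U : Ultrafilter ℕ, NonPrincipal U ∧ ultraChi U = c}

/-- `A ⊆* B` : `A \ B` is finite. -/
def SubsetStar (A B : Set ℕ) : Prop := (A \ B).Finite

/-- A P-point. -/
def PPoint (V : Ultrafilter ℕ) : Prop :=
  NonPrincipal V ∧ ∀ C : Set (Set ℕ), C.Countable → (∀ A ∈ C, A ∈ V) →
    ∃ B ∈ V, ∀ A ∈ C, SubsetStar B A

/-- A `P_κ`-point. -/
def PKappaPoint (κ : Cardinal) (V : Ultrafilter ℕ) : Prop :=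
  NonPrincipal V ∧ ∀ C : Set (Set ℕ), Cardinal.mk C < κ → (∀ A ∈ C, A ∈ V) →
    ∃ B ∈ V, ∀ A ∈ C, SubsetStar B A

/-- `next(n, X)` : the least element of `X` which is `≥ n`. -/
noncomputable def nextIn (n : ℕ) (X : Set ℕ) : ℕ := sInf {x | x ∈ X ∧ n ≤ x}

/-- `F↓` : the monotone functions `g` with `f ≺ g` for all `f ∈ F`. -/
def FDown (F : Set (ℕ → ℕ)) : Set (ℕ → ℕ) := {g | Monotone g ∧ ∀ f ∈ F, Prec f g}

/-- `F` has a countable upper bound. -/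
def CountableUpperBound (F : Set (ℕ → ℕ)) : Prop :=
  ∃ G : Set (ℕ → ℕ), G.Countable ∧ G ⊆ FDown F ∧
    ¬ ∃ p, Monotone p ∧ (∀ f ∈ F, Prec f p) ∧ (∀ g ∈ G, Prec p g)

namespace BFU

open scoped Classical

/-- fast scale -/
def TT (n : ℕ) : ℕ := Nat.factorial (n+1)

lemma TT_mono : Monotone TT := fun a b h => Nat.factorial_le (by omega)

lemma TT_pos (n : ℕ) : 0 < TT n := Nat.factorial_pos _

lemma TT_ge (n : ℕ) : n + 1 ≤ TT n := Nat.self_le_factorial _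

lemma TT_succ (n : ℕ) : TT (n+1) = (n+2) * TT n := rfl

lemma TT_gap {C : ℕ} {n : ℕ} (hn : 2*C + 1 ≤ n) : TT (n-1) + C * (n+1) ≤ TT n := by
  obtain ⟨m, rfl⟩ : ∃ m, n = m + 1 := ⟨n - 1, by omega⟩
  rcases Nat.eq_zero_or_pos C with rfl | hC
  · simp only [Nat.add_sub_cancel, Nat.zero_mul, Nat.add_zero]
    exact TT_mono (by omega)
  have hm2 : 2 ≤ m := by omega
  have hf : 2 ≤ Nat.factorial m := le_trans (by norm_num) (Nat.factorial_le hm2)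
  have h1 : m + 2 ≤ TT m := by
    unfold TT
    rw [Nat.factorial_succ]
    nlinarith
  have h2 : C * (m + 1 + 1) ≤ (m+1) * TT m := by nlinarith
  have h3 : TT (m+1) = TT m + (m+1) * TT m := by rw [TT_succ]; ring
  simp only [Nat.add_sub_cancel]
  omega

lemma TT_lt_succ (n : ℕ) : TT n < TT (n+1) := by
  rw [TT_succ]; nlinarith [TT_pos n]

/-- `phi D n = TT (max (D ∩ [0,n]))` (or 0). -/
noncomputable def phi (D : Set ℕ) (n : ℕ) : ℕ :=
  (Finset.range (n+1)).sup (fun m => if m ∈ D then TT m else 0)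

lemma phi_mono (D : Set ℕ) : Monotone (phi D) := fun a b h =>
  Finset.sup_mono (Finset.range_subset_range.2 (by omega))

lemma phi_mono_set {D E : Set ℕ} (h : D ⊆ E) (n : ℕ) : phi D n ≤ phi E n := by
  apply Finset.sup_le
  intro m hm
  by_cases hmD : m ∈ D
  · simp only [if_pos hmD, if_pos (h hmD)]
    exact Finset.le_sup (f := fun m => if m ∈ E then TT m else 0) hm |>.trans_eq' (by simp [h hmD])
  · simp [hmD]

lemma phi_le_TT (D : Set ℕ) (n : ℕ) : phi D n ≤ TT n := by
  apply Finset.sup_le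
  intro m hm
  rw [Finset.mem_range] at hm
  split
  · exact TT_mono (by omega)
  · positivity

lemma TT_le_phi {D : Set ℕ} {n : ℕ} (h : n ∈ D) : TT n ≤ phi D n := by
  have := Finset.le_sup (f := fun m => if m ∈ D then TT m else 0)
    (Finset.self_mem_range_succ n)
  simpa [h, phi] using this

lemma phi_le_of_bound {D : Set ℕ} {n j : ℕ} (h : ∀ m ∈ D, m ≤ n → m ≤ j) :
    phi D n ≤ TT j := by
  apply Finset.sup_le
  intro m hm
  rw [Finset.mem_range] at hm
  split
  · exact TT_mono (h m ‹_› (by omega))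
  · positivity

lemma phi_le_pred {D : Set ℕ} {n : ℕ} (h : n ∉ D) : phi D n ≤ TT (n-1) := by
  apply phi_le_of_bound
  intro m hm hmn
  rcases eq_or_lt_of_le hmn with rfl | h'
  · exact absurd hm h
  · omega

lemma infinite_exists_gt {S : Set ℕ} (hS : S.Infinite) (a : ℕ) : ∃ m ∈ S, a < m := by
  by_contra h
  push_neg at h
  exact hS ((Set.finite_Iic a).subset h)

/-! ### nextIn -/

lemma nextIn_spec {B : Set ℕ} (hB : B.Infinite) (n : ℕ) :
    nextIn n B ∈ B ∧ n ≤ nextIn n B := by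
  have hne : {x | x ∈ B ∧ n ≤ x}.Nonempty := by
    obtain ⟨m, hm, hlt⟩ := infinite_exists_gt hB n
    exact ⟨m, hm, hlt.le⟩
  exact Nat.sInf_mem hne

lemma nextIn_mono {B : Set ℕ} (hB : B.Infinite) : Monotone (fun n => nextIn n B) := by
  intro a b hab
  have h := nextIn_spec hB b
  exact Nat.sInf_le ⟨h.1, hab.trans h.2⟩

lemma nextIn_eq_self {B : Set ℕ} {n : ℕ} (h : n ∈ B) : nextIn n B = n := by
  have hne : {x | x ∈ B ∧ n ≤ x}.Nonempty := ⟨n, h, le_rfl⟩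
  exact le_antisymm (Nat.sInf_le ⟨h, le_rfl⟩) (Nat.sInf_mem hne).2

/-! ### star helpers -/

lemma LeStar.trans' {f g h : ℕ → ℕ} (h1 : LeStar f g) (h2 : LeStar g h) : LeStar f h :=
  (h1.and h2).mono fun _ ⟨a, b⟩ => a.trans b

lemma not_ltStar_of_frequently {h f : ℕ → ℕ} (H : ∃ᶠ n in atTop, f n ≤ h n) :
    ¬ LtStar h f := fun hlt => (H.and_eventually hlt).exists.elim (fun _ ⟨a, b⟩ => by omega)

/-- a frequent witness beyond an infinite set -/
lemma frequently_of_infinite {S : Set ℕ} (hS : S.Infinite) {P : ℕ → Prop}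
    (h : ∀ᶠ n in atTop, n ∈ S → P n) : ∃ᶠ n in atTop, P n := by
  rw [eventually_atTop] at h
  obtain ⟨n₀, hn₀⟩ := h
  rw [frequently_atTop]
  intro a
  obtain ⟨m, hm, hlt⟩ := infinite_exists_gt hS (max a n₀)
  exact ⟨m, by omega, hn₀ m (by omega) hm⟩


/-- ceiling core lemma -/
lemma ceiling_core {D B : Set ℕ} (hB : B.Infinite) (hDB : (D ∩ B).Finite)
    (m k N : ℕ) : ∀ᶠ n in atTop, phi D n + (m * n + k) + N ≤ TT (nextIn n B) := by
  obtain ⟨b₀, hb₀⟩ : ∃ b₀, ∀ p ∈ D ∩ B, p < b₀ := by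
    obtain ⟨b₀, hb₀⟩ := hDB.bddAbove
    exact ⟨b₀ + 1, fun p hp => by have := hb₀ hp; omega⟩
  rw [eventually_atTop]
  refine ⟨max b₀ (2*(m+k+N)+1), fun n hn => ?_⟩
  obtain ⟨htB, hnt⟩ := nextIn_spec hB n
  have hb : b₀ ≤ n := le_trans (le_max_left _ _) hn
  have hc : 2*(m+k+N)+1 ≤ n := le_trans (le_max_right _ _) hn
  have hphi : phi D n ≤ TT (nextIn n B - 1) := by
    apply phi_le_of_bound
    intro p hp hpn
    have hne : p ≠ nextIn n B := by
      intro he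
      have h1 : p < b₀ := hb₀ p ⟨hp, by rw [he]; exact htB⟩
      omega
    have := hpn.trans hnt
    omega
  have hgap : TT (nextIn n B - 1) + (m+k+N) * (nextIn n B + 1) ≤ TT (nextIn n B) :=
    TT_gap (by omega)
  have h2 : m * n + k + N ≤ (m+k+N) * (nextIn n B + 1) := by
    calc m*n + k + N ≤ (m+k+N)*n + (m+k+N) := by nlinarith
    _ ≤ (m+k+N)*(nextIn n B) + (m+k+N) := by
        have := Nat.mul_le_mul_left (m+k+N) hnt; omega
    _ = (m+k+N)*(nextIn n B + 1) := by ring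
  omega

/-! ### base partition of the odds -/

def Odds : Set ℕ := {n | n % 2 = 1}

def Oset (k : ℕ) : Set ℕ := Set.range fun a => 2 * Nat.pair k a + 1

def Ofam : Set (Set ℕ) := Set.range Oset

lemma Oset_infinite (k : ℕ) : (Oset k).Infinite := by
  apply Set.infinite_range_of_injective
  intro a b hab
  have hab2 : 2 * Nat.pair k a + 1 = 2 * Nat.pair k b + 1 := hab
  have := Nat.pair_eq_pair.mp (by omega : Nat.pair k a = Nat.pair k b)
  exact this.2

lemma Oset_subset_odds (k : ℕ) : Oset k ⊆ Odds := by
  rintro x ⟨a, rfl⟩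
  simp [Odds, Nat.add_mul_mod_self_left]

lemma Oset_disjoint {k k' : ℕ} (h : k ≠ k') : Oset k ∩ Oset k' = ∅ := by
  ext x
  simp only [Oset, Set.mem_inter_iff, Set.mem_range, Set.mem_empty_iff_false, iff_false]
  rintro ⟨⟨a, rfl⟩, ⟨b, hb⟩⟩
  have hb2 : 2 * Nat.pair k' b + 1 = 2 * Nat.pair k a + 1 := hb
  have := Nat.pair_eq_pair.mp (by omega : Nat.pair k' b = Nat.pair k a)
  exact h this.1.symm

lemma Oset_injective : Function.Injective Oset := by
  intro k k' h
  by_contra hne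
  have h1 : (2 * Nat.pair k 0 + 1) ∈ Oset k := ⟨0, rfl⟩
  rw [h] at h1
  have := Oset_disjoint hne
  have : (2 * Nat.pair k 0 + 1) ∈ Oset k ∩ Oset k' := ⟨⟨0, rfl⟩, h1⟩
  simp_all

lemma Ofam_countable : Ofam.Countable := Set.countable_range _

lemma Ofam_infinite : Ofam.Infinite := Set.infinite_range_of_injective Oset_injective

/-! ### the evens family -/

def Evens : Set ℕ := {n | n % 2 = 0}

lemma odds_evens_inter {A B : Set ℕ} (hA : A ⊆ Odds) (hB : B ⊆ Evens) : A ∩ B = ∅ := by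
  ext x
  simp only [Set.mem_inter_iff, Set.mem_empty_iff_false, iff_false]
  rintro ⟨h1, h2⟩
  have := hA h1; have := hB h2
  simp [Odds, Evens] at *
  omega

noncomputable def Aset (y : ℕ → Bool) : Set ℕ :=
  Set.range fun k => 2 * Encodable.encode (List.ofFn fun i : Fin k => y i)

lemma Aset_code_inj (y : ℕ → Bool) :
    Function.Injective fun k => 2 * Encodable.encode (List.ofFn fun i : Fin k => y i) := by
  intro a b hab
  have hab2 : 2 * Encodable.encode (List.ofFn fun i : Fin a => y i)
      = 2 * Encodable.encode (List.ofFn fun i : Fin b => y i) := hab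
  have h : (List.ofFn fun i : Fin a => y i) = (List.ofFn fun i : Fin b => y i) :=
    Encodable.encode_injective (by omega)
  have := congrArg List.length h
  simpa using this

lemma Aset_infinite (y : ℕ → Bool) : (Aset y).Infinite :=
  Set.infinite_range_of_injective (Aset_code_inj y)

lemma Aset_subset_evens (y : ℕ → Bool) : Aset y ⊆ Evens := by
  rintro x ⟨k, rfl⟩
  simp [Evens, Nat.mul_mod_right]

lemma Aset_almost_disjoint {y y' : ℕ → Bool} (h : y ≠ y') :
    (Aset y ∩ Aset y').Finite := by
  obtain ⟨d, hd⟩ : ∃ d, y d ≠ y' d := by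
    by_contra hc
    push_neg at hc
    exact h (funext hc)
  apply Set.Finite.subset (((Set.finite_Iic d).image
    (fun k => 2 * Encodable.encode (List.ofFn fun i : Fin k => y i))))
  rintro x ⟨⟨k, rfl⟩, ⟨k', hk'⟩⟩
  have hk2 : 2 * Encodable.encode (List.ofFn fun i : Fin k' => y' i)
      = 2 * Encodable.encode (List.ofFn fun i : Fin k => y i) := hk'
  have hlist : (List.ofFn fun i : Fin k' => y' i) = (List.ofFn fun i : Fin k => y i) :=
    Encodable.encode_injective (by omega)
  have hkk : k' = k := by
    have := congrArg List.length hlist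
    simpa using this
  subst hkk
  have hfn : (fun i : Fin k' => y' i) = (fun i : Fin k' => y i) := List.ofFn_inj.mp hlist
  refine ⟨k', ?_, rfl⟩
  simp only [Set.mem_Iic]
  by_contra hkd
  push_neg at hkd
  exact hd (congrFun hfn ⟨d, by omega⟩).symm

def GoodFam (C : Set (Set ℕ)) : Prop :=
  C.Countable ∧ C.Infinite ∧ (∀ A ∈ C, A.Infinite ∧ A ⊆ Odds) ∧
    C.Pairwise fun A B => (A ∩ B).Finite

lemma exists_luzStep {C : Set (Set ℕ)} (h : GoodFam C) :
    ∃ D : Set ℕ, D.Infinite ∧ D ⊆ Odds ∧ (∀ A ∈ C, (D ∩ A).Finite) ∧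
      (∀ n : ℕ, {A | A ∈ C ∧ D ∩ A ⊆ Set.Iio n}.Finite) := by
  obtain ⟨h1, h2, h3, h4⟩ := h
  haveI := h1.to_subtype
  haveI := h2.to_subtype
  obtain ⟨d⟩ := nonempty_denumerable (↥C)
  set e : ℕ ≃ ↥C := (Denumerable.eqv (↥C)).symm with he
  set E : ℕ → Set ℕ := fun k => (e k : Set ℕ) with hE
  have hEmem : ∀ k, E k ∈ C := fun k => (e k).2
  have hEinj : ∀ {j k : ℕ}, j ≠ k → E j ≠ E k := by
    intro j k hjk heq
    exact hjk (e.injective (Subtype.ext heq))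
  have hx : ∀ k : ℕ, ∃ x, x ∈ E k ∧ (∀ j < k, x ∉ E j) ∧ 2*k < x := by
    intro k
    have hEk : (E k).Infinite := (h3 _ (hEmem k)).1
    have hfin : (E k ∩ (⋃ j ∈ Finset.range k, E j)).Finite := by
      rw [Set.inter_iUnion₂]
      apply Set.Finite.biUnion (Finset.range k).finite_toSet
      intro j hj
      rw [Finset.mem_coe, Finset.mem_range] at hj
      exact h4 (hEmem k) (hEmem j) (hEinj (by omega))
    obtain ⟨x, hx⟩ := (hEk.diff (hfin.union (Set.finite_Iic (2*k)))).nonempty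
    rw [Set.mem_diff, Set.mem_union, Set.mem_inter_iff] at hx
    refine ⟨x, hx.1, ?_, ?_⟩
    · intro j hj hxj
      exact hx.2 (Or.inl ⟨hx.1, Set.mem_biUnion (Finset.mem_coe.mpr (Finset.mem_range.mpr hj)) hxj⟩)
    · have : x ∉ Set.Iic (2*k) := fun hc => hx.2 (Or.inr hc)
      simpa using this
  choose x hx1 hx2 hx3 using hx
  refine ⟨Set.range x, ?_, ?_, ?_, ?_⟩
  · apply Set.infinite_of_forall_exists_gt
    intro a
    exact ⟨x (a+1), ⟨a+1, rfl⟩, by have := hx3 (a+1); omega⟩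
  · rintro z ⟨k, rfl⟩
    exact (h3 _ (hEmem k)).2 (hx1 k)
  · intro A hA
    set m := e.symm ⟨A, hA⟩ with hm
    have hAm : E m = A := by rw [hE]; simp [hm]
    apply Set.Finite.subset ((Set.finite_Iic m).image x)
    rintro z ⟨⟨k, rfl⟩, hzA⟩
    refine ⟨k, ?_, rfl⟩
    simp only [Set.mem_Iic]
    by_contra hkm
    push_neg at hkm
    exact hx2 k m hkm (hAm ▸ hzA)
  · intro n
    apply Set.Finite.subset ((Set.finite_Iio n).image E)
    rintro A ⟨hA, hsub⟩
    set m := e.symm ⟨A, hA⟩ with hm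
    have hAm : E m = A := by rw [hE]; simp [hm]
    refine ⟨m, ?_, hAm⟩
    simp only [Set.mem_Iio]
    have hxm : x m ∈ Set.range x ∩ A := ⟨⟨m, rfl⟩, hAm ▸ hx1 m⟩
    have := hsub hxm
    simp only [Set.mem_Iio] at this
    have := hx3 m
    omega

noncomputable def luzStep (C : Set (Set ℕ)) : Set ℕ :=
  if h : GoodFam C then (exists_luzStep h).choose else ∅

lemma luzStep_spec {C : Set (Set ℕ)} (h : GoodFam C) :
    (luzStep C).Infinite ∧ luzStep C ⊆ Odds ∧ (∀ A ∈ C, (luzStep C ∩ A).Finite) ∧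
      (∀ n : ℕ, {A | A ∈ C ∧ luzStep C ∩ A ⊆ Set.Iio n}.Finite) := by
  rw [luzStep, dif_pos h]
  exact (exists_luzStep h).choose_spec

lemma goodIns {P : Set (Set ℕ)} (h : GoodFam P) : GoodFam (insert (luzStep P) P) := by
  obtain ⟨s1, s2, s3, s4⟩ := luzStep_spec h
  refine ⟨h.1.insert _, h.2.1.mono (Set.subset_insert _ _), ?_, ?_⟩
  · rintro A (rfl | hA)
    · exact ⟨s1, s2⟩
    · exact h.2.2.1 A hA
  · rw [Set.pairwise_insert]
    refine ⟨h.2.2.2, ?_⟩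
    intro B hB _
    exact ⟨s3 B hB, by rw [Set.inter_comm]; exact s3 B hB⟩

/-! ### the index type W -/

noncomputable abbrev W : Type := (Cardinal.aleph 1).ord.ToType

lemma W_Iio_countable (i : W) : (Set.Iio i).Countable :=
  (Cardinal.countable_iff_lt_aleph_one _).2 (Cardinal.mk_Iio_ord_toType i)

lemma W_uncountable : ¬ (Set.univ : Set W).Countable := by
  rw [Cardinal.countable_iff_lt_aleph_one, Cardinal.mk_univ, Cardinal.mk_toType,
    Cardinal.card_ord]
  exact lt_irrefl _

lemma W_Iic_countable (i : W) : (Set.Iic i).Countable := by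
  have : Set.Iic i = Set.Iio i ∪ {i} := by
    ext w; simp [le_iff_lt_or_eq]
  rw [this]
  exact (W_Iio_countable i).union (Set.countable_singleton _)

lemma W_unbounded {S : Set W} (hS : ¬ S.Countable) (b : W) : ∃ s ∈ S, b < s := by
  by_contra h
  push_neg at h
  exact hS ((W_Iic_countable b).mono h)

lemma W_countable_bdd {Q : Set W} (hQ : Q.Countable) : ∃ b : W, ∀ q ∈ Q, q ≤ b := by
  by_contra h
  push_neg at h
  apply W_uncountable
  have hsub : (Set.univ : Set W) ⊆ ⋃ q ∈ Q, Set.Iic q := by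
    intro w _
    obtain ⟨q, hq, hlt⟩ := h w
    exact Set.mem_biUnion hq hlt.le
  exact ((hQ.biUnion fun q _ => W_Iic_countable q).mono hsub)

lemma W_pigeonhole {S : Set W} (hS : ¬ S.Countable) (f : W → ℕ) :
    ∃ c, ¬ {w | w ∈ S ∧ f w = c}.Countable := by
  by_contra h
  push_neg at h
  apply hS
  have : S = ⋃ c, {w | w ∈ S ∧ f w = c} := by
    ext w; simp only [Set.mem_iUnion, Set.mem_setOf_eq]
    exact ⟨fun hw => ⟨f w, hw, rfl⟩, fun ⟨c, hc, _⟩ => hc⟩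
  rw [this]
  exact Set.countable_iUnion h

/-! ### the double Luzin family -/

noncomputable def Lz : W → Set ℕ × Set ℕ :=
  (IsWellFounded.wf (α := W) (r := (· < ·))).fix fun i rec =>
    let P := Ofam ∪ {A | ∃ j, ∃ h : j < i, A = (rec j h).1 ∨ A = (rec j h).2}
    (luzStep P, luzStep (insert (luzStep P) P))

def PredF (i : W) : Set (Set ℕ) :=
  Ofam ∪ {A | ∃ j, ∃ _ : j < i, A = (Lz j).1 ∨ A = (Lz j).2}

lemma Lz_eq (i : W) :
    Lz i = (luzStep (PredF i), luzStep (insert (luzStep (PredF i)) (PredF i))) := by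
  rw [Lz, WellFounded.fix_eq]
  rfl

def floorS (i : W) : Set ℕ := (Lz i).1
def ceilS (i : W) : Set ℕ := (Lz i).2

lemma floorS_eq (i : W) : floorS i = luzStep (PredF i) := by
  rw [floorS, Lz_eq]

lemma ceilS_eq (i : W) : ceilS i = luzStep (insert (floorS i) (PredF i)) := by
  rw [ceilS, Lz_eq, floorS_eq]

lemma floor_spec {j : W} (h : GoodFam (PredF j)) :
    (floorS j).Infinite ∧ floorS j ⊆ Odds ∧ (∀ A ∈ PredF j, (floorS j ∩ A).Finite) ∧
      (∀ n : ℕ, {A | A ∈ PredF j ∧ floorS j ∩ A ⊆ Set.Iio n}.Finite) := by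
  rw [floorS_eq]
  exact luzStep_spec h

lemma ceil_spec {j : W} (h : GoodFam (PredF j)) :
    (ceilS j).Infinite ∧ ceilS j ⊆ Odds ∧
      (∀ A ∈ insert (floorS j) (PredF j), (ceilS j ∩ A).Finite) ∧
      (∀ n : ℕ, {A | A ∈ insert (floorS j) (PredF j) ∧ ceilS j ∩ A ⊆ Set.Iio n}.Finite) := by
  rw [ceilS_eq, floorS_eq]
  exact luzStep_spec (goodIns h)

lemma goodPred : ∀ i : W, GoodFam (PredF i) := by
  intro i
  induction i using WellFoundedLT.induction with
  | _ i IH =>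
  constructor
  · apply Ofam_countable.union
    have : {A | ∃ j, ∃ _ : j < i, A = (Lz j).1 ∨ A = (Lz j).2} ⊆
        (floorS '' Set.Iio i) ∪ (ceilS '' Set.Iio i) := by
      rintro A ⟨j, hj, rfl | rfl⟩
      · exact Or.inl ⟨j, hj, rfl⟩
      · exact Or.inr ⟨j, hj, rfl⟩
    exact (((W_Iio_countable i).image floorS).union ((W_Iio_countable i).image ceilS)).mono this
  constructor
  · exact Ofam_infinite.mono Set.subset_union_left
  constructor
  · rintro A (⟨k, rfl⟩ | ⟨j, hj, rfl | rfl⟩)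
    · exact ⟨Oset_infinite k, Oset_subset_odds k⟩
    · exact ⟨(floor_spec (IH j hj)).1, (floor_spec (IH j hj)).2.1⟩
    · exact ⟨(ceil_spec (IH j hj)).1, (ceil_spec (IH j hj)).2.1⟩
  · -- pairwise
    have hOL : ∀ j, j < i → ∀ A ∈ Ofam, (((Lz j).1 ∩ A).Finite ∧ ((Lz j).2 ∩ A).Finite) := by
      intro j hj A hA
      exact ⟨(floor_spec (IH j hj)).2.2.1 A (Or.inl hA),
        (ceil_spec (IH j hj)).2.2.1 A (Or.inr (Or.inl hA))⟩
    have hLL : ∀ j j', j < i → j' < j → ∀ X, (X = (Lz j).1 ∨ X = (Lz j).2) →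
        ∀ Y, (Y = (Lz j').1 ∨ Y = (Lz j').2) → (X ∩ Y).Finite := by
      intro j j' hj hj' X hX Y hY
      have hYP : Y ∈ PredF j := by
        rcases hY with rfl | rfl
        · exact Or.inr ⟨j', hj', Or.inl rfl⟩
        · exact Or.inr ⟨j', hj', Or.inr rfl⟩
      rcases hX with rfl | rfl
      · exact (floor_spec (IH j hj)).2.2.1 Y hYP
      · exact (ceil_spec (IH j hj)).2.2.1 Y (Set.mem_insert_iff.mpr (Or.inr hYP))
    rintro A (⟨k, rfl⟩ | ⟨j, hj, hA⟩) B (⟨k', rfl⟩ | ⟨j', hj', hB⟩) hAB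
    · -- Oset vs Oset
      have hkk : k ≠ k' := fun h => hAB (by rw [h])
      rw [Oset_disjoint hkk]
      exact Set.finite_empty
    · -- Oset vs Lz
      have := hOL j' hj' (Oset k) ⟨k, rfl⟩
      rcases hB with rfl | rfl
      · rw [Set.inter_comm]; exact this.1
      · rw [Set.inter_comm]; exact this.2
    · -- Lz vs Oset
      have := hOL j hj (Oset k') ⟨k', rfl⟩
      rcases hA with rfl | rfl
      · exact this.1
      · exact this.2
    · -- Lz vs Lz
      rcases lt_trichotomy j j' with hlt | rfl | hlt
      · rw [Set.inter_comm]
        exact hLL j' j hj' hlt B hB A hA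
      · -- same index : must be floor vs ceil
        have hfc : ((Lz j).2 ∩ (Lz j).1).Finite := by
          have := (ceil_spec (IH j hj)).2.2.1 (floorS j)
            (Set.mem_insert_iff.mpr (Or.inl rfl))
          simpa [ceilS, floorS] using this
        rcases hA with rfl | rfl <;> rcases hB with rfl | rfl
        · exact absurd rfl hAB
        · rw [Set.inter_comm]; exact hfc
        · exact hfc
        · exact absurd rfl hAB
      · exact hLL j j' hj hlt A hA B hB


lemma floor_infinite (i : W) : (floorS i).Infinite := (floor_spec (goodPred i)).1
lemma floor_subset_odds (i : W) : floorS i ⊆ Odds := (floor_spec (goodPred i)).2.1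
lemma ceil_infinite (i : W) : (ceilS i).Infinite := (ceil_spec (goodPred i)).1
lemma ceil_subset_odds (i : W) : ceilS i ⊆ Odds := (ceil_spec (goodPred i)).2.1

lemma floor_mem_PredF {j i : W} (h : j < i) : floorS j ∈ PredF i :=
  Or.inr ⟨j, h, Or.inl rfl⟩

lemma ceil_mem_PredF {j i : W} (h : j < i) : ceilS j ∈ PredF i :=
  Or.inr ⟨j, h, Or.inr rfl⟩

lemma floor_inter_ceil_finite (v w : W) : (floorS v ∩ ceilS w).Finite := by
  rcases lt_trichotomy v w with hlt | rfl | hlt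
  · have := (ceil_spec (goodPred w)).2.2.1 (floorS v)
      (Set.mem_insert_iff.mpr (Or.inr (floor_mem_PredF hlt)))
    rw [Set.inter_comm]; exact this
  · have := (ceil_spec (goodPred v)).2.2.1 (floorS v) (Set.mem_insert_iff.mpr (Or.inl rfl))
    rw [Set.inter_comm]; exact this
  · exact (floor_spec (goodPred v)).2.2.1 (ceilS w) (ceil_mem_PredF hlt)

lemma floor_inter_floor_finite {v w : W} (h : v ≠ w) : (floorS v ∩ floorS w).Finite := by
  rcases lt_trichotomy v w with hlt | rfl | hlt
  · rw [Set.inter_comm]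
    exact (floor_spec (goodPred w)).2.2.1 (floorS v) (floor_mem_PredF hlt)
  · exact absurd rfl h
  · exact (floor_spec (goodPred v)).2.2.1 (floorS w) (floor_mem_PredF hlt)

lemma floor_ne {v w : W} (h : v ≠ w) : floorS v ≠ floorS w := by
  intro he
  have hf := floor_inter_floor_finite h
  rw [he, Set.inter_self] at hf
  exact floor_infinite w hf

lemma ceil_luzin (w : W) (n : ℕ) :
    {A | A ∈ insert (floorS w) (PredF w) ∧ ceilS w ∩ A ⊆ Set.Iio n}.Finite :=
  (ceil_spec (goodPred w)).2.2.2 n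


/-! ### the parametric family -/

def Idx (X : Set (ℕ → Bool)) : Type := ↥X ⊕ W

noncomputable def Bas (X : Set (ℕ → Bool)) : Idx X → Set ℕ :=
  Sum.elim (fun x => Aset x.1) (fun w => floorS w)

variable {X : Set (ℕ → Bool)}

lemma Bas_infinite (i : Idx X) : (Bas X i).Infinite := by
  cases i with
  | inl x => exact Aset_infinite x.1
  | inr w => exact floor_infinite w

lemma Bas_AD {i j : Idx X} (h : i ≠ j) : (Bas X i ∩ Bas X j).Finite := by
  simp only [Bas]
  cases i with
  | inl x =>
    cases j with
    | inl x' =>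
      have : x.1 ≠ x'.1 := by
        intro he
        exact h (by rw [show x = x' from Subtype.ext he])
      exact Aset_almost_disjoint this
    | inr w =>
      simp only [Sum.elim_inl, Sum.elim_inr]
      rw [Set.inter_comm, odds_evens_inter (floor_subset_odds w) (Aset_subset_evens x.1)]
      exact Set.finite_empty
  | inr w =>
    cases j with
    | inl x =>
      simp only [Sum.elim_inl, Sum.elim_inr]
      rw [odds_evens_inter (floor_subset_odds w) (Aset_subset_evens x.1)]
      exact Set.finite_empty
    | inr w' =>
      have : w ≠ w' := fun he => h (by rw [he])
      exact floor_inter_floor_finite this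

lemma Bas_inter_ceil_finite (i : Idx X) (w : W) : (Bas X i ∩ ceilS w).Finite := by
  simp only [Bas]
  cases i with
  | inl x =>
    simp only [Sum.elim_inl, Sum.elim_inr]
    rw [Set.inter_comm, odds_evens_inter (ceil_subset_odds w) (Aset_subset_evens x.1)]
    exact Set.finite_empty
  | inr v => exact floor_inter_ceil_finite v w

noncomputable def bigD (X : Set (ℕ → Bool)) (s : Finset (Idx X)) : Set ℕ :=
  ⋃ i ∈ s, Bas X i

lemma bigD_inter_ceil_finite (s : Finset (Idx X)) (w : W) :
    (bigD X s ∩ ceilS w).Finite := by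
  rw [bigD, Set.iUnion₂_inter]
  exact Set.Finite.biUnion s.finite_toSet fun i _ => Bas_inter_ceil_finite i w

noncomputable def gfun (X : Set (ℕ → Bool)) (s : Finset (Idx X)) (m k : ℕ) : ℕ → ℕ :=
  fun n => phi (bigD X s) n + (m * n + k)

lemma gfun_mono (s : Finset (Idx X)) (m k : ℕ) : Monotone (gfun X s m k) := by
  intro a b hab
  have h1 := phi_mono (bigD X s) hab
  have h2 : m * a ≤ m * b := Nat.mul_le_mul_left _ hab
  simp only [gfun]
  omega

def Fam (X : Set (ℕ → Bool)) (Par : Set (Finset (Idx X) × ℕ × ℕ)) : Set (ℕ → ℕ) :=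
  {f | Monotone f ∧ ∃ p ∈ Par, LeStar f (gfun X p.1 p.2.1 p.2.2)}

variable {Par : Set (Finset (Idx X) × ℕ × ℕ)}

lemma Fam_subset_mono : Fam X Par ⊆ MonoFam := fun _ hf => hf.1

lemma Fam_downward : DownwardClosed (Fam X Par) := by
  rintro f hf g ⟨hg, p, hp, hle⟩ hfg
  exact ⟨hf, p, hp, (hfg.and hle).mono fun n ⟨a, b⟩ => a.trans b⟩

lemma gfun_mem {p : Finset (Idx X) × ℕ × ℕ} (hpp : p ∈ Par) :
    gfun X p.1 p.2.1 p.2.2 ∈ Fam X Par :=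
  ⟨gfun_mono p.1 p.2.1 p.2.2, p, hpp, Filter.Eventually.of_forall fun _ => le_rfl⟩

lemma phiB_mem (hP1 : ∀ i : Idx X, (({i} : Finset (Idx X)), (0:ℕ), (0:ℕ)) ∈ Par) (i : Idx X) :
    phi (Bas X i) ∈ Fam X Par := by
  refine ⟨phi_mono _, ({i}, 0, 0), hP1 i, Filter.Eventually.of_forall fun n => ?_⟩
  have : Bas X i ⊆ bigD X {i} := Set.subset_biUnion_of_mem (Finset.mem_singleton_self i)
  have := phi_mono_set this n
  simp only [gfun]
  omega

/-! ### the ceiling functions -/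

noncomputable def hceil (w : W) : ℕ → ℕ := fun n => TT (nextIn n (ceilS w))

lemma hceil_mono (w : W) : Monotone (hceil w) :=
  fun a b hab => TT_mono (nextIn_mono (ceil_infinite w) hab)

lemma hceil_mem_FDown (w : W) : hceil w ∈ FDown (Fam X Par) := by
  refine ⟨hceil_mono w, ?_⟩
  rintro f ⟨hf, p, hp, hle⟩ N
  have hcc := ceiling_core (ceil_infinite w) (bigD_inter_ceil_finite p.1 w) p.2.1 p.2.2 N
  filter_upwards [hle, hcc] with n h1 h2
  exact le_trans (by simp only [gfun] at h1; omega) h2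

/-! ### the gap argument -/

lemma no_lower_bound (hP1 : ∀ i : Idx X, (({i} : Finset (Idx X)), (0:ℕ), (0:ℕ)) ∈ Par) :
    ¬ ∃ g ∈ FDown (Fam X Par), ∀ w : W, Prec g (hceil w) := by
  rintro ⟨g, ⟨hgmono, hgF⟩, hg⟩
  -- floor bounds
  have hfl : ∀ w : W, ∃ b : ℕ, ∀ n ≥ b, n ∈ floorS w → TT n ≤ g n := by
    intro w
    have h0 : Prec (phi (Bas X (Sum.inr w))) g := hgF _ (phiB_mem hP1 (Sum.inr w))
    obtain ⟨b, hb⟩ := eventually_atTop.mp (h0 0)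
    refine ⟨b, fun n hn hnf => ?_⟩
    have h1 : TT n ≤ phi (Bas X (Sum.inr w)) n := TT_le_phi (by exact hnf)
    have := hb n hn
    omega
  have hcl : ∀ w : W, ∃ b : ℕ, ∀ n ≥ b, n ∈ ceilS w → g n < TT n := by
    intro w
    obtain ⟨b, hb⟩ := eventually_atTop.mp (hg w 1)
    refine ⟨b, fun n hn hnc => ?_⟩
    have := hb n hn
    rw [hceil, nextIn_eq_self hnc] at this
    omega
  choose b0 hb0 using hfl
  choose b1 hb1 using hcl
  -- pigeonhole
  obtain ⟨c0, hc0⟩ := W_pigeonhole W_uncountable b0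
  obtain ⟨c1, hc1⟩ := W_pigeonhole W_uncountable b1
  set S0 := {w : W | w ∈ Set.univ ∧ b0 w = c0} with hS0
  set S1 := {w : W | w ∈ Set.univ ∧ b1 w = c1} with hS1
  have hS0inf : S0.Infinite := fun hfin => hc0 hfin.countable
  have e := hS0inf.natEmbedding
  obtain ⟨b, hb⟩ := W_countable_bdd (Set.countable_range fun n => ((e n : ↥S0) : W))
  obtain ⟨ws, hwsS1, hbws⟩ := W_unbounded hc1 b
  -- each floor of the sequence is caught
  have hmem : ∀ k : ℕ, floorS ((e k : ↥S0) : W) ∈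
      {A | A ∈ insert (floorS ws) (PredF ws) ∧ ceilS ws ∩ A ⊆ Set.Iio (max c0 c1)} := by
    intro k
    have hlt : ((e k : ↥S0) : W) < ws := lt_of_le_of_lt (hb _ ⟨k, rfl⟩) hbws
    refine ⟨Set.mem_insert_iff.mpr (Or.inr (floor_mem_PredF hlt)), ?_⟩
    rintro p ⟨hpc, hpf⟩
    by_contra hpn
    simp only [Set.mem_Iio, not_lt] at hpn
    have h1 : TT p ≤ g p := by
      have hek : ((e k : ↥S0) : W) ∈ S0 := (e k).2
      have : b0 ((e k : ↥S0) : W) = c0 := hek.2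
      exact hb0 _ p (by omega) hpf
    have h2 : g p < TT p := by
      have : b1 ws = c1 := hwsS1.2
      exact hb1 ws p (by omega) hpc
    omega
  have hinj : Function.Injective fun k => floorS ((e k : ↥S0) : W) := by
    intro a b hab
    have hW : ((e a : ↥S0) : W) = ((e b : ↥S0) : W) := by
      by_contra hne
      exact floor_ne hne hab
    exact e.injective (Subtype.ext hW)
  have : (Set.range fun k => floorS ((e k : ↥S0) : W)).Infinite :=
    Set.infinite_range_of_injective hinj
  apply this
  apply (ceil_luzin ws (max c0 c1)).subset
  rintro A ⟨k, rfl⟩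
  exact hmem k


lemma bigD_singleton_subset (i : Idx X) : bigD X {i} ⊆ Bas X i := by
  intro a ha
  rw [bigD, Set.mem_iUnion₂] at ha
  obtain ⟨i', hi', ha⟩ := ha
  rw [Finset.mem_singleton] at hi'
  subst hi'
  exact ha

lemma not_mem_bigD_singleton {i : Idx X} {n : ℕ} (h : n ∉ Bas X i) : n ∉ bigD X {i} :=
  fun hc => h (bigD_singleton_subset i hc)

/-! ## dNum -/

lemma mk_Idx (kappa : Cardinal) (hX : Cardinal.mk X = kappa) (hk : Cardinal.aleph 1 ≤ kappa) :
    Cardinal.mk (Idx X) = kappa := by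
  have h0 : Cardinal.aleph 0 ≤ kappa := le_trans (Cardinal.aleph_le_aleph.mpr (by norm_num)) hk
  rw [Idx, Cardinal.mk_sum, Cardinal.lift_id, Cardinal.lift_id, hX, Cardinal.mk_toType,
    Cardinal.card_ord]
  exact Cardinal.add_eq_left (by rwa [Cardinal.aleph_zero] at h0) hk

lemma infinite_Idx (kappa : Cardinal) (hX : Cardinal.mk X = kappa) (hk : Cardinal.aleph 1 ≤ kappa) :
    Infinite (Idx X) := by
  rw [Cardinal.infinite_iff, mk_Idx kappa hX hk]
  calc Cardinal.aleph0 = Cardinal.aleph 0 := (Cardinal.aleph_zero).symm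
  _ ≤ Cardinal.aleph 1 := Cardinal.aleph_le_aleph.mpr (by norm_num)
  _ ≤ kappa := hk

lemma dNum_Fam (kappa : Cardinal) (hX : Cardinal.mk X = kappa) (hk : Cardinal.aleph 1 ≤ kappa)
    (hP1 : ∀ i : Idx X, (({i} : Finset (Idx X)), (0:ℕ), (0:ℕ)) ∈ Par) :
    dNum (Fam X Par) = kappa := by
  have haleph0 : Cardinal.aleph0 ≤ kappa := by
    have := Cardinal.aleph0_lt_aleph_one.le.trans hk
    exact this
  have haleph0' : Cardinal.aleph0 < kappa := lt_of_lt_of_le Cardinal.aleph0_lt_aleph_one hk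
  -- the dominating family
  set DD : Set (ℕ → ℕ) := (fun p : Finset (Idx X) × ℕ × ℕ => gfun X p.1 p.2.1 p.2.2) '' Par
    with hDD
  have hDDsub : DD ⊆ Fam X Par := by
    rintro f ⟨p, hp, rfl⟩
    exact gfun_mem hp
  have hDDdom : DominatesIn DD (Fam X Par) := by
    rintro f ⟨hf, p, hp, hle⟩
    exact ⟨_, ⟨p, hp, rfl⟩, hle⟩
  have hDDcard : Cardinal.mk DD ≤ kappa := by
    calc Cardinal.mk DD ≤ Cardinal.mk Par := Cardinal.mk_image_le
    _ ≤ Cardinal.mk (Finset (Idx X) × ℕ × ℕ) := Cardinal.mk_set_le Par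
    _ = kappa := by
        haveI := infinite_Idx kappa hX hk
        rw [Cardinal.mk_prod, Cardinal.lift_id, Cardinal.lift_id,
          Cardinal.mk_finset_of_infinite, mk_Idx kappa hX hk]
        have hNN : Cardinal.mk (ℕ × ℕ) = Cardinal.aleph0 := by simp
        rw [hNN]
        exact Cardinal.mul_eq_left haleph0 haleph0 Cardinal.aleph0_ne_zero
  -- lower bound : every dominating family has size ≥ kappa
  have hlow : ∀ (H : Set (ℕ → ℕ)), H ⊆ Fam X Par → DominatesIn H (Fam X Par) →
      kappa ≤ Cardinal.mk H := by
    intro H hsub hdom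
    -- choose a pattern for each member of H
    have hq : ∀ h : ↥H, ∃ p : Finset (Idx X) × ℕ × ℕ,
        LeStar h.1 (gfun X p.1 p.2.1 p.2.2) := by
      intro h
      obtain ⟨_, p, _, hle⟩ := hsub h.2
      exact ⟨p, hle⟩
    choose q hqle using hq
    -- choose a dominator for each x
    have hu : ∀ x : ↥X, ∃ h : ↥H, LeStar (phi (Bas X (Sum.inl x))) h.1 := by
      intro x
      obtain ⟨h, hh, hle⟩ := hdom _ (phiB_mem hP1 (Sum.inl x))
      exact ⟨⟨h, hh⟩, hle⟩
    choose u hule using hu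
    -- each x appears in the chosen finset
    have hxs : ∀ x : ↥X, Sum.inl x ∈ (q (u x)).1 := by
      intro x
      by_contra hxn
      have hADs : (Bas X (Sum.inl x) ∩ bigD X (q (u x)).1).Finite := by
        rw [bigD, Set.inter_iUnion₂]
        apply Set.Finite.biUnion (q (u x)).1.finite_toSet
        intro i hi
        exact Bas_AD (fun he => hxn (he ▸ Finset.mem_coe.mp hi))
      have hE : (Bas X (Sum.inl x) \ (Bas X (Sum.inl x) ∩ bigD X (q (u x)).1)).Infinite :=
        (Bas_infinite _).diff hADs
      obtain ⟨b1, hb1⟩ := eventually_atTop.mp (hule x)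
      obtain ⟨b2, hb2⟩ := eventually_atTop.mp (hqle (u x))
      obtain ⟨n, hn, hngt⟩ := infinite_exists_gt hE
        (max (max b1 b2) (2*((q (u x)).2.1+(q (u x)).2.2+1)+1))
      obtain ⟨hnB, hnD⟩ := Set.mem_diff _ |>.mp hn
      have hnD' : n ∉ bigD X (q (u x)).1 := fun hc => hnD ⟨hnB, hc⟩
      have h1 : TT n ≤ phi (Bas X (Sum.inl x)) n := TT_le_phi hnB
      have h2 := hb1 n (by omega)
      have h3 := hb2 n (by omega)
      have h4 : phi (bigD X (q (u x)).1) n ≤ TT (n-1) := phi_le_pred hnD'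
      have h5 : TT (n-1) + ((q (u x)).2.1+(q (u x)).2.2+1) * (n+1) ≤ TT n := TT_gap (by omega)
      have h6 : (q (u x)).2.1 * n + (q (u x)).2.2 <
          ((q (u x)).2.1+(q (u x)).2.2+1) * (n+1) := by nlinarith
      simp only [gfun] at h3
      omega
    -- count fibers
    haveI hXne : Nonempty (↥X) := by
      rw [← Cardinal.mk_ne_zero_iff (α := ↥X)]
      rw [hX]
      intro h0
      rw [h0] at hk
      exact absurd (lt_of_lt_of_le (Cardinal.aleph_pos 1) hk) (lt_irrefl 0)
    haveI hHne : Nonempty (↥H) := by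
      obtain ⟨h, hh, _⟩ := hdom _ (phiB_mem hP1 (Sum.inl (Classical.arbitrary ↥X)))
      exact ⟨⟨h, hh⟩⟩
    have hcover : (Set.univ : Set ↥X) ⊆ ⋃ h : ↥H, {x : ↥X | u x = h} := by
      intro x _
      exact Set.mem_iUnion.mpr ⟨u x, rfl⟩
    have hfib : ∀ h : ↥H, Cardinal.mk {x : ↥X | u x = h} ≤ Cardinal.aleph0 := by
      intro h
      have hinj : Function.Injective
          (fun x : {x : ↥X | u x = h} => (⟨Sum.inl x.1, by
            have := hxs x.1
            rw [x.2] at this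
            exact this⟩ : ((q h).1 : Finset (Idx X)))) := by
        intro a b hab
        have h2 : (Sum.inl a.1 : Idx X) = Sum.inl b.1 := congrArg Subtype.val hab
        exact Subtype.ext (Sum.inl.inj h2)
      have := Cardinal.mk_le_of_injective hinj
      exact this.trans (le_of_lt (Cardinal.lt_aleph0_of_finite _))
    have hXle : kappa ≤ Cardinal.mk (↥H) * Cardinal.aleph0 := by
      calc kappa = Cardinal.mk (↥X) := hX.symm
      _ = Cardinal.mk (Set.univ : Set ↥X) := Cardinal.mk_univ.symm
      _ ≤ Cardinal.mk (⋃ h : ↥H, {x : ↥X | u x = h}) := Cardinal.mk_le_mk_of_subset hcover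
      _ ≤ Cardinal.mk (↥H) * ⨆ h : ↥H, Cardinal.mk {x : ↥X | u x = h} := Cardinal.mk_iUnion_le _
      _ ≤ Cardinal.mk (↥H) * Cardinal.aleph0 := by
          exact mul_le_mul_right (ciSup_le' hfib) _
    by_contra hcon
    push_neg at hcon
    have : Cardinal.mk (↥H) * Cardinal.aleph0 < kappa :=
      Cardinal.mul_lt_of_lt haleph0 hcon haleph0'
    exact absurd hXle (not_le.mpr this)
  -- compute the infimum
  have hmem : Cardinal.mk DD ∈
      {c : Cardinal | ∃ H : Set (ℕ → ℕ), H ⊆ Fam X Par ∧ DominatesIn H (Fam X Par) ∧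
        Cardinal.mk H = c} := ⟨DD, hDDsub, hDDdom, rfl⟩
  apply le_antisymm
  · exact le_trans (csInf_le' hmem) hDDcard
  · apply le_csInf ⟨_, hmem⟩
    rintro c ⟨H, hsub, hdom, rfl⟩
    exact hlow H hsub hdom

/-! ## bNum -/

lemma W_nonempty : Nonempty W := by
  rw [← Cardinal.mk_ne_zero_iff, Cardinal.mk_toType, Cardinal.card_ord]
  exact (Cardinal.aleph_pos 1).ne'

lemma W_nontrivial : Nontrivial W := by
  rw [← Cardinal.one_lt_iff_nontrivial, Cardinal.mk_toType, Cardinal.card_ord]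
  exact lt_of_lt_of_le Cardinal.one_lt_aleph0 (Cardinal.aleph0_le_aleph 1)

lemma bigD_mono {s t : Finset (Idx X)} (h : s ⊆ t) : bigD X s ⊆ bigD X t := by
  intro a ha
  rw [bigD, Set.mem_iUnion₂] at ha ⊢
  obtain ⟨i, hi, ha⟩ := ha
  exact ⟨i, h hi, ha⟩

lemma bNum_one (hP : Par = {p : Finset (Idx X) × ℕ × ℕ | ∃ i : Idx X, p = ({i}, 0, 0)}) :
    bNum (Fam X Par) = 1 := by
  have hP1 : ∀ i : Idx X, (({i} : Finset (Idx X)), (0:ℕ), (0:ℕ)) ∈ Par := by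
    intro i; rw [hP]; exact ⟨i, rfl⟩
  obtain ⟨w₀⟩ := W_nonempty
  set i₀ : Idx X := Sum.inr w₀ with hi₀
  have hmem : (1 : Cardinal) ∈ {c : Cardinal | ∃ H : Set (ℕ → ℕ), H ⊆ Fam X Par ∧
      UnboundedIn H (Fam X Par) ∧ Cardinal.mk H = c} := by
    refine ⟨{phi (Bas X i₀)}, ?_, ?_, Cardinal.mk_singleton _⟩
    · rw [Set.singleton_subset_iff]
      exact phiB_mem hP1 i₀
    · rintro f ⟨hf, p, hp, hle⟩
      refine ⟨phi (Bas X i₀), rfl, not_ltStar_of_frequently ?_⟩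
      apply frequently_of_infinite (Bas_infinite i₀)
      rw [hP] at hp
      obtain ⟨j, rfl⟩ := hp
      filter_upwards [hle] with n h1 hni
      have h2 : phi (bigD X {j}) n ≤ TT n := phi_le_TT _ n
      have h3 : TT n ≤ phi (Bas X i₀) n := TT_le_phi hni
      simp only [gfun] at h1
      omega
  apply le_antisymm
  · exact csInf_le' hmem
  · apply le_csInf ⟨_, hmem⟩
    rintro c ⟨H, hsub, hunb, rfl⟩
    rw [Cardinal.one_le_iff_ne_zero]
    intro h0
    rw [Cardinal.mk_eq_zero_iff] at h0
    obtain ⟨h, hh, _⟩ := hunb _ (phiB_mem hP1 i₀)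
    exact h0.false ⟨h, hh⟩

lemma bNum_two (hP : Par = {p : Finset (Idx X) × ℕ × ℕ | ∃ (j : Idx X) (k : ℕ),
    p = ({j}, 0, k)}) : bNum (Fam X Par) = 2 := by
  have hP1 : ∀ i : Idx X, (({i} : Finset (Idx X)), (0:ℕ), (0:ℕ)) ∈ Par := by
    intro i; rw [hP]; exact ⟨i, 0, rfl⟩
  haveI := W_nontrivial
  obtain ⟨w₀, w₁, hww⟩ := exists_pair_ne W
  set i₀ : Idx X := Sum.inr w₀ with hi₀
  set i₁ : Idx X := Sum.inr w₁ with hi₁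
  have hii : i₀ ≠ i₁ := fun he => hww (Sum.inr.inj he)
  -- the two functions are distinct
  have hphine : phi (Bas X i₀) ≠ phi (Bas X i₁) := by
    obtain ⟨n, hn, hn1⟩ := infinite_exists_gt ((Bas_infinite i₀).diff (Bas_AD hii)) 0
    obtain ⟨hnB, hnB'⟩ := Set.mem_diff _ |>.mp hn
    intro he
    have h1 : TT n ≤ phi (Bas X i₀) n := TT_le_phi hnB
    have h2 : phi (Bas X i₁) n ≤ TT (n-1) := phi_le_pred (fun hc => hnB' ⟨hnB, hc⟩)
    have h3 : TT (n-1) < TT n := by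
      have := TT_lt_succ (n-1)
      have hn' : n - 1 + 1 = n := by omega
      rwa [hn'] at this
    rw [he] at h1
    omega
  have hunbpair : UnboundedIn {phi (Bas X i₀), phi (Bas X i₁)} (Fam X Par) := by
    rintro f ⟨hf, p, hp, hle⟩
    rw [hP] at hp
    obtain ⟨j, k, rfl⟩ := hp
    have key : ∀ l : Idx X, l ≠ j → ∃ᶠ n in atTop, f n ≤ phi (Bas X l) n := by
      intro l hlj
      apply frequently_of_infinite ((Bas_infinite l).diff (Bas_AD hlj))
      filter_upwards [hle, eventually_ge_atTop (2*k+1)] with n h1 h2 hn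
      obtain ⟨hnB, hnB'⟩ := Set.mem_diff _ |>.mp hn
      have h3 : phi (bigD X {j}) n ≤ TT (n-1) :=
        phi_le_pred (not_mem_bigD_singleton (fun hc => hnB' ⟨hnB, hc⟩))
      have h4 : TT (n-1) + k * (n+1) ≤ TT n := TT_gap (by omega)
      have h5 : TT n ≤ phi (Bas X l) n := TT_le_phi hnB
      have h6 : k ≤ k * (n+1) := Nat.le_mul_of_pos_right _ (by omega)
      simp only [gfun] at h1
      omega
    by_cases hj : j = i₀
    · exact ⟨phi (Bas X i₁), Or.inr rfl,
        not_ltStar_of_frequently (key i₁ (fun he => hii (hj ▸ he.symm)))⟩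
    · exact ⟨phi (Bas X i₀), Or.inl rfl,
        not_ltStar_of_frequently (key i₀ (fun he => hj he.symm))⟩
  have hmem : (2 : Cardinal) ∈ {c : Cardinal | ∃ H : Set (ℕ → ℕ), H ⊆ Fam X Par ∧
      UnboundedIn H (Fam X Par) ∧ Cardinal.mk H = c} := by
    refine ⟨{phi (Bas X i₀), phi (Bas X i₁)}, ?_, hunbpair, ?_⟩
    · rintro h (rfl | rfl)
      · exact phiB_mem hP1 i₀
      · exact phiB_mem hP1 i₁
    · rw [Cardinal.mk_insert (by simpa using hphine), Cardinal.mk_singleton]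
      norm_num
  apply le_antisymm
  · exact csInf_le' hmem
  · apply le_csInf ⟨_, hmem⟩
    rintro c ⟨H, hsub, hunb, rfl⟩
    rw [Cardinal.two_le_iff]
    -- find two distinct elements of H
    obtain ⟨h₀, hh₀, _⟩ := hunb _ (phiB_mem hP1 i₀)
    obtain ⟨_, p, hp, hle⟩ := hsub hh₀
    rw [hP] at hp
    obtain ⟨j, k, rfl⟩ := hp
    have hfF : gfun X {j} 0 (k+1) ∈ Fam X Par :=
      gfun_mem (p := ({j}, 0, k+1)) (by rw [hP]; exact ⟨j, k+1, rfl⟩)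
    obtain ⟨h₁, hh₁, hnlt⟩ := hunb _ hfF
    refine ⟨⟨h₀, hh₀⟩, ⟨h₁, hh₁⟩, ?_⟩
    intro he
    rw [Subtype.mk.injEq] at he
    apply hnlt
    rw [← he]
    filter_upwards [hle] with n h1
    simp only [gfun] at h1 ⊢
    omega

lemma bNum_omega (hP : Par = Set.univ) : bNum (Fam X Par) = Cardinal.aleph0 := by
  have hP1 : ∀ i : Idx X, (({i} : Finset (Idx X)), (0:ℕ), (0:ℕ)) ∈ Par := by
    intro i; rw [hP]; trivial
  obtain ⟨w₀⟩ := W_nonempty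
  set i₀ : Idx X := Sum.inr w₀ with hi₀
  set hb : ℕ → (ℕ → ℕ) := fun m => fun n => phi (Bas X i₀) n + m * n with hhb
  have hbmem : ∀ m, hb m ∈ Fam X Par := by
    intro m
    refine ⟨?_, ({i₀}, m, 0), by rw [hP]; trivial, ?_⟩
    · intro a b hab
      have h1 := phi_mono (Bas X i₀) hab
      have h2 : m * a ≤ m * b := Nat.mul_le_mul_left _ hab
      simp only [hhb]
      omega
    · apply Filter.Eventually.of_forall
      intro n
      have hsubb : Bas X i₀ ⊆ bigD X {i₀} := fun a ha =>
        Set.mem_biUnion (Finset.mem_coe.mpr (Finset.mem_singleton_self i₀)) ha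
      have := phi_mono_set hsubb n
      simp only [hhb, gfun]
      omega
  have hmem : Cardinal.mk (Set.range hb) ∈ {c : Cardinal | ∃ H : Set (ℕ → ℕ),
      H ⊆ Fam X Par ∧ UnboundedIn H (Fam X Par) ∧ Cardinal.mk H = c} := by
    refine ⟨Set.range hb, ?_, ?_, rfl⟩
    · rintro h ⟨m, rfl⟩
      exact hbmem m
    · rintro f ⟨hf, p, hp, hle⟩
      refine ⟨hb (p.2.1 + p.2.2), ⟨p.2.1 + p.2.2, rfl⟩, not_ltStar_of_frequently ?_⟩
      apply frequently_of_infinite (Bas_infinite i₀)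
      filter_upwards [hle, eventually_ge_atTop 1] with n h1 h2 hni
      have h3 : phi (bigD X p.1) n ≤ TT n := phi_le_TT _ n
      have h4 : TT n ≤ phi (Bas X i₀) n := TT_le_phi hni
      have h5 : p.2.2 ≤ p.2.2 * n := Nat.le_mul_of_pos_right _ (by omega)
      simp only [gfun] at h1
      simp only [hhb]
      nlinarith
  have hrange_le : Cardinal.mk (Set.range hb) ≤ Cardinal.aleph0 := by
    haveI := (Set.countable_range hb).to_subtype
    exact Cardinal.mk_le_aleph0
  apply le_antisymm
  · exact le_trans (csInf_le' hmem) hrange_le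
  · apply le_csInf ⟨_, hmem⟩
    rintro c ⟨H, hsub, hunb, rfl⟩
    by_contra hlt
    push_neg at hlt
    have hHfin : H.Finite := Cardinal.lt_aleph0_iff_set_finite.mp hlt
    haveI := hHfin.fintype
    have hq : ∀ h : ↥H, ∃ p : Finset (Idx X) × ℕ × ℕ,
        LeStar h.1 (gfun X p.1 p.2.1 p.2.2) := by
      intro h
      obtain ⟨_, p, _, hle⟩ := hsub h.2
      exact ⟨p, hle⟩
    choose q hqle using hq
    set M : ℕ := 1 + Finset.univ.sup (fun h : ↥H => (q h).2.1 + (q h).2.2) with hM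
    set sT : Finset (Idx X) := Finset.univ.biUnion (fun h : ↥H => (q h).1) with hsT
    have hfF : gfun X sT M 0 ∈ Fam X Par :=
      gfun_mem (p := (sT, M, 0)) (by rw [hP]; trivial)
    obtain ⟨h, hh, hnlt⟩ := hunb _ hfF
    apply hnlt
    filter_upwards [hqle ⟨h, hh⟩, eventually_ge_atTop 1] with n h1 h2
    have hsub4 : (q ⟨h, hh⟩).1 ⊆ sT := by
      rw [hsT]
      exact Finset.subset_biUnion_of_mem (fun h : ↥H => (q h).1) (Finset.mem_univ (⟨h, hh⟩ : ↥H))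
    have h3 : phi (bigD X (q ⟨h, hh⟩).1) n ≤ phi (bigD X sT) n :=
      phi_mono_set (bigD_mono hsub4) n
    have h4 : (q ⟨h, hh⟩).2.1 + (q ⟨h, hh⟩).2.2 + 1 ≤ M := by
      have h4' := Finset.le_sup (f := fun h : ↥H => (q h).2.1 + (q h).2.2)
        (Finset.mem_univ ⟨h, hh⟩)
      omega
    have h5 : (q ⟨h, hh⟩).2.1 * n + (q ⟨h, hh⟩).2.2 < M * n := by
      calc (q ⟨h, hh⟩).2.1 * n + (q ⟨h, hh⟩).2.2
          ≤ ((q ⟨h, hh⟩).2.1 + (q ⟨h, hh⟩).2.2) * n := by nlinarith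
        _ < ((q ⟨h, hh⟩).2.1 + (q ⟨h, hh⟩).2.2 + 1) * n := by nlinarith
        _ ≤ M * n := Nat.mul_le_mul_right _ h4
    simp only [gfun] at h1 ⊢
    omega



lemma assemble {X : Set (ℕ → Bool)} (Par : Set (Finset (Idx X) × ℕ × ℕ)) (kappa : Cardinal)
    (hX : Cardinal.mk X = kappa) (hk : Cardinal.aleph 1 ≤ kappa)
    (hP1 : ∀ i : Idx X, (({i} : Finset (Idx X)), (0:ℕ), (0:ℕ)) ∈ Par) :
    Fam X Par ⊆ MonoFam ∧ DownwardClosed (Fam X Par) ∧ dNum (Fam X Par) = kappa ∧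
    ∃ H : Set (ℕ → ℕ), H ⊆ FDown (Fam X Par) ∧ Cardinal.mk H ≤ Cardinal.aleph 1 ∧
      ¬ ∃ g ∈ FDown (Fam X Par), ∀ h ∈ H, Prec g h := by
  refine ⟨Fam_subset_mono, Fam_downward, dNum_Fam kappa hX hk hP1,
    Set.range hceil, ?_, ?_, ?_⟩
  · rintro h ⟨w, rfl⟩
    exact hceil_mem_FDown w
  · calc Cardinal.mk (Set.range hceil) ≤ Cardinal.mk W := Cardinal.mk_range_le
      _ = Cardinal.aleph 1 := by rw [Cardinal.mk_toType, Cardinal.card_ord]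
  · rintro ⟨g, hg, hgh⟩
    exact no_lower_bound hP1 ⟨g, hg, fun w => hgh (hceil w) ⟨w, rfl⟩⟩


end BFU

/-- For `λ ∈ {1, 2, ℵ₀}` and `ℵ₁ ≤ κ ≤ 𝔠`, there is a
downward-closed family with `b(F) = λ`, `d(F) = κ` and upper bound at most `ω₁`. -/
theorem bounded_family_upper_bound_omega1
    (lam : Cardinal) (hlam : lam ∈ ({1, 2, Cardinal.aleph0} : Set Cardinal))
    (kappa : Cardinal) (h1 : Cardinal.aleph 1 ≤ kappa) (h2 : kappa ≤ Cardinal.continuum) :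
    ∃ F : Set (ℕ → ℕ), F ⊆ MonoFam ∧ DownwardClosed F ∧
      bNum F = lam ∧ dNum F = kappa ∧
      ∃ H : Set (ℕ → ℕ), H ⊆ FDown F ∧ Cardinal.mk H ≤ Cardinal.aleph 1 ∧
        ¬ ∃ g ∈ FDown F, ∀ h ∈ H, Prec g h := by
  have hcm : Cardinal.mk (ℕ → Bool) = Cardinal.continuum := by
    rw [← Cardinal.two_power_aleph0, ← Cardinal.mk_bool, ← Cardinal.mk_nat, Cardinal.power_def]
  obtain ⟨X, hX⟩ := Cardinal.le_mk_iff_exists_set.mp (h2.trans_eq hcm.symm)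
  simp only [Set.mem_insert_iff, Set.mem_singleton_iff] at hlam
  rcases hlam with rfl | rfl | rfl
  · obtain ⟨c1, c2, c3, c4⟩ := BFU.assemble
      {p : Finset (BFU.Idx X) × ℕ × ℕ | ∃ i : BFU.Idx X, p = ({i}, 0, 0)} kappa hX h1
      (fun i => ⟨i, rfl⟩)
    exact ⟨_, c1, c2, BFU.bNum_one rfl, c3, c4⟩
  · obtain ⟨c1, c2, c3, c4⟩ := BFU.assemble
      {p : Finset (BFU.Idx X) × ℕ × ℕ | ∃ (j : BFU.Idx X) (k : ℕ), p = ({j}, 0, k)} kappa hX h1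
      (fun i => ⟨i, 0, rfl⟩)
    exact ⟨_, c1, c2, BFU.bNum_two rfl, c3, c4⟩
  · obtain ⟨c1, c2, c3, c4⟩ := BFU.assemble
      (Set.univ : Set (Finset (BFU.Idx X) × ℕ × ℕ)) kappa hX h1
      (fun i => trivial)
    exact ⟨_, c1, c2, BFU.bNum_omega rfl, c3, c4⟩
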